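/- arXiv:1309.6911 — 8 statements merged into one kernel-verified Lean document; each statement's English description precedes it below -/
import Mathlib

section
/- If a and b are elements of a C*-algebra, a has Moore-Penrose inverse a†, and the pair (a,b) doubly commutes (ab = ba and ab* = b*a), then a†b = ba†. -/
/-- `b` satisfies the four Penrose equations for `a`. -/
def IsMP {R : Type*} [Ring R] [StarRing R] (a b : R) : Prop :=
  a * b * a = a ∧ b * a * b = b ∧ star (b * a) = b * a ∧ star (a * b) = a * b

variable {A : Type*} [NormedRing A] [StarRing A] [CStarRing A] [CompleteSpace A]
  [NormedAlgebra ℂ A] [StarModule ℂ A]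

/-- Star-conjugation of a one-sided invariance relation. -/
lemma star_conj {R : Type*} [Ring R] [StarRing R] (p c : R) (hp : star p = p)
    (h : star c * p = p * star c * p) : p * c = p * c * p := by
  have h' := congrArg star h
  simp only [star_mul, star_star, hp] at h'
  rw [← mul_assoc] at h'
  exact h'

/-- If `b` and `star b` commute with `a`, and `a * ad * a = a` with `a * ad`
self-adjoint, then `b` commutes with the projection `a * ad`. -/
lemma comm_proj {R : Type*} [Ring R] [StarRing R] (a ad b : R)
    (haa : a * ad * a = a) (hp : star (a * ad) = a * ad)
    (h1 : a * b = b * a) (h2 : a * star b = star b * a) :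
    (a * ad) * b = b * (a * ad) := by
  have key : ∀ c : R, a * c = c * a → c * (a * ad) = (a * ad) * c * (a * ad) := by
    intro c hc
    calc c * (a * ad) = (c * a) * ad := by noncomm_ring
      _ = (a * c) * ad := by rw [hc]
      _ = ((a * ad * a) * c) * ad := by rw [haa]
      _ = (a * ad) * (a * c) * ad := by noncomm_ring
      _ = (a * ad) * (c * a) * ad := by rw [hc]
      _ = (a * ad) * c * (a * ad) := by noncomm_ring
  have hb := key b h1
  have hbs := key (star b) h2
  have hpb : (a * ad) * b = (a * ad) * b * (a * ad) := star_conj (a * ad) b hp hbs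
  rw [hpb, ← hb]

theorem stmt4 (a ad b : A) (ha : IsMP a ad)
    (h1 : a * b = b * a) (h2 : a * star b = star b * a) :
    ad * b = b * ad := by
  obtain ⟨h1a, h2a, h3a, h4a⟩ := ha
  -- b commutes with star a
  have hb2 : star a * b = b * star a := by
    have := congrArg star h2
    simpa [star_mul] using this.symm
  -- b commutes with p = a * ad
  have hp : (a * ad) * b = b * (a * ad) :=
    comm_proj a ad b h1a h4a h1 h2
  -- b commutes with q = ad * a, via applying comm_proj to star a, star ad
  have hq : (ad * a) * b = b * (ad * a) := by
    have hps : star a * star ad = ad * a := by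
      rw [← star_mul, h3a]
    have haa' : star a * star ad * star a = star a := by
      rw [← star_mul, ← star_mul, ← mul_assoc, h1a]
    have hp' : star (star a * star ad) = star a * star ad := by
      rw [hps]; exact h3a
    have h2' : star a * star b = star b * star a := by
      rw [← star_mul, ← star_mul, h1]
    have := comm_proj (star a) (star ad) b haa' hp' hb2 h2'
    rwa [hps] at this
  calc ad * b = (ad * a * ad) * b := by rw [h2a]
    _ = ad * ((a * ad) * b) := by noncomm_ring
    _ = ad * (b * (a * ad)) := by rw [hp]
    _ = ad * (b * a) * ad := by noncomm_ring
    _ = ad * (a * b) * ad := by rw [← h1]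
    _ = ((ad * a) * b) * ad := by noncomm_ring
    _ = (b * (ad * a)) * ad := by rw [hq]
    _ = b * (ad * a * ad) := by noncomm_ring
    _ = b * ad := by rw [h2a]
end

section
/- If a and b are elements of a C*-algebra, a has Moore-Penrose inverse a†, and (a,b) doubly commutes, then (a†, b) doubly commutes: a†b = ba† and a†b* = b*a†. -/
private lemma aux_comm {R : Type*} [Ring R] (q b : R)
    (k1 : (1 - q) * b * q = 0) (k2 : q * b * (1 - q) = 0) : b * q = q * b := by
  have a1 : b * q - q * (b * q) = 0 := by rw [← k1]; noncomm_ring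
  have a2 : q * b - q * (b * q) = 0 := by rw [← k2]; noncomm_ring
  rw [sub_eq_zero] at a1 a2
  rw [a1, a2]

private lemma comm_key {R : Type*} [Ring R] [StarRing R] (a ad b : R) (ha : IsMP a ad)
    (h1 : a * b = b * a) (h2 : a * star b = star b * a) : ad * b = b * ad := by
  obtain ⟨e1, e2, e3, e4⟩ := ha
  -- (1 - a*ad) * a = 0 and a * (1 - ad*a) = 0
  have hq0 : (1 - a * ad) * a = 0 := by rw [sub_mul, one_mul, e1, sub_self]
  have hp0 : a * (1 - ad * a) = 0 := by
    rw [mul_sub, mul_one, ← mul_assoc, e1, sub_self]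
  -- b commutes with q = a * ad
  have hbq : b * (a * ad) = (a * ad) * b := by
    apply aux_comm
    · calc (1 - a * ad) * b * (a * ad)
          = (1 - a * ad) * (b * a) * ad := by noncomm_ring
        _ = (1 - a * ad) * a * b * ad := by rw [← h1]; noncomm_ring
        _ = 0 := by rw [hq0, zero_mul, zero_mul]
    · have hs : (1 - a * ad) * star b * (a * ad) = 0 := by
        calc (1 - a * ad) * star b * (a * ad)
            = (1 - a * ad) * (star b * a) * ad := by noncomm_ring
          _ = (1 - a * ad) * a * star b * ad := by rw [← h2]; noncomm_ring
          _ = 0 := by rw [hq0, zero_mul, zero_mul]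
      have := congrArg star hs
      simpa [star_mul, star_sub, e4, mul_assoc] using this
  -- b commutes with p = ad * a
  have hbp : b * (ad * a) = (ad * a) * b := by
    apply aux_comm
    · have hs : (ad * a) * star b * (1 - ad * a) = 0 := by
        calc (ad * a) * star b * (1 - ad * a)
            = ad * (a * star b) * (1 - ad * a) := by noncomm_ring
          _ = ad * star b * (a * (1 - ad * a)) := by rw [h2]; noncomm_ring
          _ = 0 := by rw [hp0, mul_zero]
      have hst := congrArg star hs
      rw [star_mul, star_mul, star_sub, star_one, star_star, e3, star_zero] at hst
      calc (1 - ad * a) * b * (ad * a) = (1 - ad * a) * (b * (ad * a)) := by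
            rw [mul_assoc]
        _ = 0 := hst
    · calc (ad * a) * b * (1 - ad * a)
          = ad * (a * b) * (1 - ad * a) := by noncomm_ring
        _ = ad * b * (a * (1 - ad * a)) := by rw [h1]; noncomm_ring
        _ = 0 := by rw [hp0, mul_zero]
  -- a * (ad*b - b*ad) = 0
  have hax : a * (ad * b - b * ad) = 0 := by
    have : a * (ad * b) = a * (b * ad) := by
      calc a * (ad * b) = (a * ad) * b := by noncomm_ring
        _ = b * (a * ad) := hbq.symm
        _ = (b * a) * ad := by noncomm_ring
        _ = (a * b) * ad := by rw [h1]
        _ = a * (b * ad) := by noncomm_ring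
    rw [mul_sub, this, sub_self]
  -- (ad*a) * (ad*b - b*ad) = ad*b - b*ad
  have hpx : (ad * a) * (ad * b - b * ad) = ad * b - b * ad := by
    have t1 : (ad * a) * (ad * b) = ad * b := by
      calc (ad * a) * (ad * b) = (ad * a * ad) * b := by noncomm_ring
        _ = ad * b := by rw [e2]
    have t2 : (ad * a) * (b * ad) = b * ad := by
      calc (ad * a) * (b * ad) = ((ad * a) * b) * ad := by noncomm_ring
        _ = (b * (ad * a)) * ad := by rw [← hbp]
        _ = b * (ad * a * ad) := by noncomm_ring
        _ = b * ad := by rw [e2]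
    rw [mul_sub, t1, t2]
  have : ad * b - b * ad = 0 := by
    calc ad * b - b * ad = (ad * a) * (ad * b - b * ad) := hpx.symm
      _ = ad * (a * (ad * b - b * ad)) := by rw [mul_assoc]
      _ = 0 := by rw [hax, mul_zero]
  exact sub_eq_zero.mp this

variable {A : Type*} [NormedRing A] [StarRing A] [CStarRing A] [CompleteSpace A]
  [NormedAlgebra ℂ A] [StarModule ℂ A]

theorem stmt5 (a ad b : A) (ha : IsMP a ad)
    (h1 : a * b = b * a) (h2 : a * star b = star b * a) :
    ad * b = b * ad ∧ ad * star b = star b * ad := by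
  refine ⟨comm_key a ad b ha h1 h2, comm_key a ad (star b) ha h2 ?_⟩
  rw [star_star]; exact h1
end

section
/- If a and b are Moore-Penrose invertible elements of a C*-algebra and the pair (a,b) doubly commutes, then the pair (a†, b†) doubly commutes. -/
/-- If `e` is a self-adjoint element with `e * x * e = x * e` and
`e * star x * e = star x * e`, then `e` commutes with `x`. -/
private lemma proj_comm {R : Type*} [Ring R] [StarRing R] (e x : R)
    (hstar : star e = e) (hxe : e * x * e = x * e)
    (hx'e : e * star x * e = star x * e) : e * x = x * e := by
  have h2 : e * x * e = e * x := by
    have := congrArg star hx'e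
    simp only [star_mul, star_star, hstar] at this
    simpa [mul_assoc] using this
  exact h2.symm.trans hxe

/-- If `x` commutes with `a` and `star a`, then `x` commutes with any
Moore–Penrose inverse of `a`. -/
private lemma mp_comm {R : Type*} [Ring R] [StarRing R] (a ad x : R) (ha : IsMP a ad)
    (h1 : x * a = a * x) (h2 : x * star a = star a * x) : x * ad = ad * x := by
  obtain ⟨p1, p2, p3, p4⟩ := ha
  have h1' : star x * a = a * star x := by
    have := congrArg star h2
    simpa [star_mul] using this.symm
  have h2' : star x * star a = star a * star x := by
    have := congrArg star h1
    simpa [star_mul] using this.symm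
  -- e = a * ad commutes with x
  have key1 : ∀ y : R, y * a = a * y → (a * ad) * y * (a * ad) = y * (a * ad) := by
    intro y hy
    calc (a * ad) * y * (a * ad) = a * ad * (y * a) * ad := by simp [mul_assoc]
      _ = a * ad * (a * y) * ad := by rw [hy]
      _ = (a * ad * a) * (y * ad) := by simp [mul_assoc]
      _ = a * (y * ad) := by rw [p1]
      _ = (a * y) * ad := by rw [mul_assoc]
      _ = (y * a) * ad := by rw [hy]
      _ = y * (a * ad) := by rw [mul_assoc]
  have he : (a * ad) * x = x * (a * ad) :=
    proj_comm (a * ad) x p4 (key1 x h1) (key1 (star x) h1')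
  -- f = ad * a commutes with x
  have hfsa : (ad * a) * star a = star a := by
    have h : star (ad * a) * star a = star a := by
      rw [← star_mul, ← mul_assoc, p1]
    rwa [p3] at h
  have key2 : ∀ y : R, y * star a = star a * y → (ad * a) * y * (ad * a) = y * (ad * a) := by
    intro y hy
    have hfform : (ad * a : R) = star a * star ad := by
      conv_lhs => rw [← p3]
      rw [star_mul]
    calc (ad * a) * y * (ad * a) = (ad * a) * y * (star a * star ad) := by rw [← hfform]
      _ = ((ad * a) * (y * star a)) * star ad := by simp [mul_assoc]
      _ = ((ad * a) * (star a * y)) * star ad := by rw [hy]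
      _ = (((ad * a) * star a) * y) * star ad := by simp [mul_assoc]
      _ = (star a * y) * star ad := by rw [hfsa]
      _ = (y * star a) * star ad := by rw [hy]
      _ = y * (star a * star ad) := by simp [mul_assoc]
      _ = y * (ad * a) := by rw [← hfform]
  have hf : (ad * a) * x = x * (ad * a) :=
    proj_comm (ad * a) x p3 (key2 x h2) (key2 (star x) h2')
  calc x * ad = x * (ad * a * ad) := by rw [p2]
    _ = (x * (ad * a)) * ad := by simp [mul_assoc]
    _ = ((ad * a) * x) * ad := by rw [← hf]
    _ = ad * ((a * x) * ad) := by simp [mul_assoc]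
    _ = ad * ((x * a) * ad) := by rw [h1]
    _ = ad * (x * (a * ad)) := by rw [mul_assoc]
    _ = ad * ((a * ad) * x) := by rw [← he]
    _ = (ad * a * ad) * x := by simp [mul_assoc]
    _ = ad * x := by rw [p2]

variable {A : Type*} [NormedRing A] [StarRing A] [CStarRing A] [CompleteSpace A]
  [NormedAlgebra ℂ A] [StarModule ℂ A]

theorem stmt6 (a ad b bd : A) (ha : IsMP a ad) (hb : IsMP b bd)
    (h1 : a * b = b * a) (h2 : a * star b = star b * a) :
    ad * bd = bd * ad ∧ ad * star bd = star bd * ad := by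
  -- b commutes with ad
  have hba : b * ad = ad * b := by
    refine mp_comm a ad b ha h1.symm ?_
    have := congrArg star h2
    simpa [star_mul] using this
  -- star b commutes with ad
  have hb'a : star b * ad = ad * star b := by
    refine mp_comm a ad (star b) ha h2.symm ?_
    have := congrArg star h1
    simpa [star_mul] using this
  constructor
  · -- ad commutes with bd
    exact mp_comm b bd ad hb hba.symm hb'a.symm
  · -- star ad commutes with bd, then star
    have h1'' : star ad * b = b * star ad := by
      have := congrArg star hb'a
      simpa [star_mul] using this
    have h2'' : star ad * star b = star b * star ad := by
      have := congrArg star hba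
      simpa [star_mul] using this
    have := mp_comm b bd (star ad) hb h1'' h2''
    have := congrArg star this
    simpa [star_mul] using this.symm
end

section
/- Let a and b be Moore-Penrose invertible elements of a C*-algebra. The pair (a,b) doubly commutes if and only if the pair (a†, b†) doubly commutes. -/
lemma comm_dagger {R : Type*} [Ring R] [StarRing R] {a ad x : R}
    (h : IsMP a ad) (h1 : x * a = a * x) (h2 : x * star a = star a * x) :
    x * ad = ad * x := by
  obtain ⟨e1, e2, e3, e4⟩ := h
  have hp : ad * a = star a * star ad := by rw [← e3, star_mul]
  have hq : a * ad = star ad * star a := by rw [← e4, star_mul]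
  have hxa : ∀ z : R, x * (a * z) = a * (x * z) := fun z => by
    rw [← mul_assoc, h1, mul_assoc]
  have hxs : ∀ z : R, x * (star a * z) = star a * (x * z) := fun z => by
    rw [← mul_assoc, h2, mul_assoc]
  have k1 : ad * a * star a = star a := by
    have k := congrArg star e1
    simp only [star_mul] at k
    rw [hp, mul_assoc]; exact k
  have k1' : ∀ z : R, ad * (a * (star a * z)) = star a * z := fun z => by
    rw [← mul_assoc, ← mul_assoc, k1]
  have k2 : star a * (a * ad) = star a := by
    have k := congrArg star e1
    simp only [star_mul] at k
    rw [hq, ← mul_assoc]; rw [← mul_assoc] at k; exact k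
  have e1' : a * (ad * a) = a := by rw [← mul_assoc]; exact e1
  have e1'' : ∀ z : R, a * (ad * (a * z)) = a * z := fun z => by
    rw [← mul_assoc, ← mul_assoc, e1]
  have e2' : ad * (a * ad) = ad := by rw [← mul_assoc]; exact e2
  -- (i) p x p = x p  where p = ad * a (right-associated)
  have i : ad * (a * (x * (ad * a))) = x * (ad * a) := by
    simp only [hp]
    rw [hxs, k1']
  -- step A : p x = x p
  have A : ad * (a * x) = x * (ad * a) := by
    rw [← h1]
    have exa : x * a = x * (a * (ad * a)) := by rw [e1']
    rw [exa, hxa, i]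
  -- step B : q x = x q  where q = a * ad
  have B : a * (ad * x) = x * (a * ad) := by
    rw [← mul_assoc, hq, mul_assoc, ← h2, ← hq, ← k2, hxs, ← mul_assoc, ← hq,
      hxa, mul_assoc a ad, e1'']
  -- conclusion
  conv_lhs => rw [← e2']
  conv_rhs => rw [← e2']
  rw [mul_assoc ad (a * ad) x, mul_assoc a ad x, B]
  rw [← mul_assoc ad a ad, ← mul_assoc x (ad * a) ad, ← A,
    mul_assoc ad (a * x) ad, mul_assoc a x ad, hxa]

lemma mp_symm {R : Type*} [Ring R] [StarRing R] {a ad : R} (h : IsMP a ad) :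
    IsMP ad a := ⟨h.2.1, h.1, h.2.2.2, h.2.2.1⟩

lemma fwd {R : Type*} [Ring R] [StarRing R] {a ad b bd : R}
    (ha : IsMP a ad) (hb : IsMP b bd)
    (h1 : a * b = b * a) (h2 : a * star b = star b * a) :
    ad * bd = bd * ad ∧ ad * star bd = star bd * ad := by
  have h1s : star b * star a = star a * star b := by
    have := congrArg star h1
    simpa only [star_mul] using this
  have h2s : b * star a = star a * b := by
    have := congrArg star h2
    simpa only [star_mul, star_star] using this
  have hb1 : b * ad = ad * b := comm_dagger ha h1.symm h2s
  have hb2 : star b * ad = ad * star b := comm_dagger ha h2.symm h1s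
  have hb1s : star ad * star b = star b * star ad := by
    have := congrArg star hb1
    simpa only [star_mul] using this
  have hb2s : star ad * b = b * star ad := by
    have := congrArg star hb2
    simpa only [star_mul, star_star] using this
  have c1 : ad * bd = bd * ad := comm_dagger hb hb1.symm hb2.symm
  have c2 : star ad * bd = bd * star ad := comm_dagger hb hb2s hb1s
  refine ⟨c1, ?_⟩
  have := congrArg star c2
  simpa only [star_mul, star_star] using this.symm

variable {A : Type*} [NormedRing A] [StarRing A] [CStarRing A] [CompleteSpace A]
  [NormedAlgebra ℂ A] [StarModule ℂ A]

theorem stmt7 (a ad b bd : A) (ha : IsMP a ad) (hb : IsMP b bd) :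
    (a * b = b * a ∧ a * star b = star b * a) ↔
      (ad * bd = bd * ad ∧ ad * star bd = star bd * ad) := by
  constructor
  · rintro ⟨u, v⟩
    exact fwd ha hb u v
  · rintro ⟨u, v⟩
    exact fwd (mp_symm ha) (mp_symm hb) u v
end

section
/- Let a₁, …, aₙ be Moore-Penrose invertible elements of a C*-algebra such that aᵢaⱼ = aⱼaᵢ and aᵢaⱼ* = aⱼ*aᵢ for all i ≠ j. Then the product a₁⋯aₙ is Moore-Penrose invertible and (a₁⋯aₙ)† = aₙ†⋯a₁† = a₁†⋯aₙ†. -/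
section Aux

variable {R : Type*} [Ring R] [StarRing R]

private lemma sw {x y : R} (h : x * y = y * x) (w : R) :
    x * (y * w) = y * (x * w) := by rw [← mul_assoc, h, mul_assoc]

private lemma col3 {x y z v : R} (h : x * y * z = v) (w : R) :
    x * (y * (z * w)) = v * w := by rw [← mul_assoc, ← mul_assoc, h]

/-- If `b` doubly commutes with `a` then `b` commutes with any MP inverse of `a`. -/
lemma comm_mp_aux {a ad b : R} (h : IsMP a ad) (h1 : a * b = b * a)
    (h2 : a * star b = star b * a) : ad * b = b * ad := by
  obtain ⟨p1, p2, p3, p4⟩ := h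
  have h1' : star b * star a = star a * star b := by
    have := congrArg star h1; simp only [star_mul] at this; exact this
  have h2' : b * star a = star a * b := by
    have := congrArg star h2; simp only [star_mul, star_star] at this; exact this
  have e_eq : ad * a = star a * star ad := by rw [← p3, star_mul]
  have ea : ad * a * star a = star a := by
    apply star_injective
    rw [star_mul, star_star, p3, ← mul_assoc, p1]
  have E : ∀ c : R, c * star a = star a * c →
      ad * a * (c * (ad * a)) = c * (ad * a) := by
    intro c hcs
    simp only [mul_assoc]
    rw [e_eq, sw hcs, col3 ea]
  have E_b := E b h2'
  have E_sb := E (star b) h1'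
  have heb : ad * a * b = b * (ad * a) := by
    have hstar := congrArg star E_sb
    simp only [star_mul, star_star] at hstar
    rw [← e_eq] at hstar
    rw [← hstar, mul_assoc (ad * a) b (ad * a), E_b]
  have F : ∀ c : R, c * a = a * c → a * ad * (c * (a * ad)) = c * (a * ad) := by
    intro c hca
    simp only [mul_assoc]
    rw [sw hca, col3 p1]
  have F_b := F b h1.symm
  have F_sb := F (star b) h2.symm
  have hfb : a * ad * b = b * (a * ad) := by
    have f_eq : a * ad = star ad * star a := by rw [← p4, star_mul]
    have hstar := congrArg star F_sb
    simp only [star_mul, star_star] at hstar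
    rw [← f_eq] at hstar
    rw [← hstar, mul_assoc (a * ad) b (a * ad), F_b]
  have hfb' : a * (ad * b) = b * (a * ad) := by rw [← mul_assoc]; exact hfb
  have heb2 : ∀ w : R, ad * (a * (b * w)) = b * (ad * (a * w)) := fun w => by
    rw [← mul_assoc, ← mul_assoc, heb, mul_assoc, mul_assoc]
  have p2' : ad * (a * ad) = ad := by rw [← mul_assoc, p2]
  calc ad * b = ad * (a * (ad * b)) := (col3 p2 b).symm
    _ = ad * (b * (a * ad)) := by rw [hfb']
    _ = ad * (a * (b * ad)) := by rw [sw h1.symm]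
    _ = b * (ad * (a * ad)) := heb2 ad
    _ = b * ad := by rw [p2']

lemma isMP_mul {a b ad bd : R} (ha : IsMP a ad) (hb : IsMP b bd)
    (k0 : a * b = b * a) (k1 : ad * b = b * ad) (k2 : a * bd = bd * a)
    (k3 : ad * bd = bd * ad) : IsMP (a * b) (bd * ad) := by
  obtain ⟨a1, a2, a3, a4⟩ := ha
  obtain ⟨b1, b2, b3, b4⟩ := hb
  have s0 := sw k0
  have s0' := sw k0.symm
  have s1 := sw k1
  have s1' := sw k1.symm
  have s2 := sw k2
  have s2' := sw k2.symm
  have s3 := sw k3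
  have s3' := sw k3.symm
  have b1' : b * (bd * b) = b := by rw [← mul_assoc, b1]
  have a2' : ad * (a * ad) = ad := by rw [← mul_assoc, a2]
  refine ⟨?_, ?_, ?_, ?_⟩
  · simp only [mul_assoc]
    rw [s3', s1', s2', s0', col3 a1, b1']
  · simp only [mul_assoc]
    rw [s0, s2, s1, s3, col3 b2, a2']
  · have key : bd * ad * (a * b) = ad * a * (bd * b) := by
      simp only [mul_assoc]; rw [s3', s2']
    rw [key, star_mul, a3, b3]
    simp only [mul_assoc]
    rw [s1', s3', ← s2', k0]
  · have key : a * b * (bd * ad) = a * ad * (b * bd) := by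
      simp only [mul_assoc]; rw [← k3, s1']
    rw [key, star_mul, a4, b4]
    simp only [mul_assoc]
    rw [s2', s0', ← s1', k3]

lemma isMP_prod : ∀ {n : ℕ} (a ad : Fin n → R), (∀ i, IsMP (a i) (ad i)) →
    (∀ i j, i ≠ j → a i * a j = a j * a i) →
    (∀ i j, i ≠ j → a i * star (a j) = star (a j) * a i) →
    IsMP (List.ofFn a).prod ((List.ofFn ad).reverse.prod) := by
  intro n
  induction n with
  | zero =>
    intro a ad _ _ _
    simp only [List.ofFn_zero, List.reverse_nil, List.prod_nil]
    exact ⟨by simp, by simp, by simp, by simp⟩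
  | succ n IH =>
    intro a ad h hc hsc
    have c_ad_a : ∀ i j, i ≠ j → ad i * a j = a j * ad i := fun i j hij =>
      comm_mp_aux (h i) (hc i j hij) (hsc i j hij)
    have c_ad_sa : ∀ i j, i ≠ j → ad i * star (a j) = star (a j) * ad i := fun i j hij =>
      comm_mp_aux (h i) (hsc i j hij) (by rw [star_star]; exact hc i j hij)
    have c_ad_ad : ∀ i j, i ≠ j → ad i * ad j = ad j * ad i := by
      intro i j hij
      have h2 : a j * star (ad i) = star (ad i) * a j := by
        have := congrArg star (c_ad_sa i j hij)
        simp only [star_mul, star_star] at this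
        exact this
      exact (comm_mp_aux (h j) (c_ad_a i j hij).symm h2).symm
    have ne0 : ∀ k : Fin n, (0 : Fin (n + 1)) ≠ k.succ := fun k => (Fin.succ_ne_zero k).symm
    have hIH : IsMP (List.ofFn fun i => a i.succ).prod
        ((List.ofFn fun i => ad i.succ).reverse.prod) :=
      IH _ _ (fun i => h i.succ)
        (fun i j hij => hc _ _ fun e => hij (Fin.succ_injective _ e))
        (fun i j hij => hsc _ _ fun e => hij (Fin.succ_injective _ e))
    have cap : Commute (a 0) (List.ofFn fun i => a i.succ).prod := by
      refine Commute.list_prod_right _ _ ?_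
      intro x hx
      rw [List.mem_ofFn] at hx
      obtain ⟨k, rfl⟩ := hx
      exact hc 0 k.succ (ne0 k)
    have cadp : Commute (ad 0) (List.ofFn fun i => a i.succ).prod := by
      refine Commute.list_prod_right _ _ ?_
      intro x hx
      rw [List.mem_ofFn] at hx
      obtain ⟨k, rfl⟩ := hx
      exact c_ad_a 0 k.succ (ne0 k)
    have caq : Commute (a 0) (List.ofFn fun i => ad i.succ).reverse.prod := by
      refine Commute.list_prod_right _ _ ?_
      intro x hx
      rw [List.mem_reverse, List.mem_ofFn] at hx
      obtain ⟨k, rfl⟩ := hx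
      exact (c_ad_a k.succ 0 (Fin.succ_ne_zero k)).symm
    have cadq : Commute (ad 0) (List.ofFn fun i => ad i.succ).reverse.prod := by
      refine Commute.list_prod_right _ _ ?_
      intro x hx
      rw [List.mem_reverse, List.mem_ofFn] at hx
      obtain ⟨k, rfl⟩ := hx
      exact c_ad_ad 0 k.succ (ne0 k)
    simp only [List.ofFn_succ, List.reverse_cons, List.prod_append, List.prod_cons,
      List.prod_singleton, List.prod_nil, mul_one]
    exact isMP_mul (h 0) hIH cap.eq cadp.eq caq.eq cadq.eq

end Aux

variable {A : Type*} [NormedRing A] [StarRing A] [CStarRing A] [CompleteSpace A]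
  [NormedAlgebra ℂ A] [StarModule ℂ A]

theorem stmt10 {n : ℕ} (a ad : Fin n → A) (h : ∀ i, IsMP (a i) (ad i))
    (hc : ∀ i j, i ≠ j → a i * a j = a j * a i)
    (hsc : ∀ i j, i ≠ j → a i * star (a j) = star (a j) * a i) :
    IsMP (List.ofFn a).prod ((List.ofFn ad).reverse.prod) ∧
      (List.ofFn ad).reverse.prod = (List.ofFn ad).prod := by
  refine ⟨isMP_prod a ad h hc hsc, ?_⟩
  have c_ad_a : ∀ i j, i ≠ j → ad i * a j = a j * ad i := fun i j hij =>
    comm_mp_aux (h i) (hc i j hij) (hsc i j hij)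
  have c_ad_sa : ∀ i j, i ≠ j → ad i * star (a j) = star (a j) * ad i := fun i j hij =>
    comm_mp_aux (h i) (hsc i j hij) (by rw [star_star]; exact hc i j hij)
  have c_ad_ad : ∀ i j, i ≠ j → ad i * ad j = ad j * ad i := by
    intro i j hij
    have h2 : a j * star (ad i) = star (ad i) * a j := by
      have := congrArg star (c_ad_sa i j hij)
      simp only [star_mul, star_star] at this
      exact this
    exact (comm_mp_aux (h j) (c_ad_a i j hij).symm h2).symm
  have pc : (List.ofFn ad).Pairwise Commute := by
    rw [List.pairwise_ofFn]
    intro i j hij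
    exact c_ad_ad i j (Fin.ne_of_lt hij)
  exact ((List.ofFn ad).reverse_perm).prod_eq'
    (List.pairwise_reverse.2 (pc.imp fun h => h.symm))
end

section
/- If b is a Moore-Penrose invertible normal element of a C*-algebra (b b* = b* b), then for every natural number n, bⁿ is Moore-Penrose invertible and (bⁿ)† = (b†)ⁿ. -/
section Aux

variable {R : Type*} [Ring R] [StarRing R]

/-- Uniqueness of the Moore-Penrose inverse in a *-ring. -/
lemma mp_unique {a y z : R} (hy : IsMP a y) (hz : IsMP a z) : y = z := by
  obtain ⟨hy1, hy2, hy3, hy4⟩ := hy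
  obtain ⟨hz1, hz2, hz3, hz4⟩ := hz
  have hay : a * y = a * z := by
    have h1 : a * y = (a * z) * (a * y) := by
      conv_lhs => rw [← hz1]
      simp [mul_assoc]
    rw [h1, ← hz4, ← hy4, ← star_mul]
    have h2 : a * y * (a * z) = a * z := by
      calc a * y * (a * z) = (a * y * a) * z := by simp [mul_assoc]
      _ = a * z := by rw [hy1]
    rw [h2, hz4]
  have hya : y * a = z * a := by
    have h1 : y * a = (y * a) * (z * a) := by
      conv_lhs => rw [← hz1]
      simp [mul_assoc]
    rw [h1, ← hz3, ← hy3, ← star_mul]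
    have h2 : z * a * (y * a) = z * a := by
      calc z * a * (y * a) = z * (a * y * a) := by simp [mul_assoc]
      _ = z * a := by rw [hy1]
    rw [h2, hz3]
  calc y = y * a * y := hy2.symm
  _ = y * (a * z) := by rw [mul_assoc, hay]
  _ = (z * a) * z := by rw [← mul_assoc, hya]
  _ = z := hz2

lemma mp_comm_s14 {a x : R} (h : IsMP a x) (hn : a * star a = star a * a) :
    a * x = x * a := by
  obtain ⟨h1, h2, h3, h4⟩ := h
  -- basic consequences
  have hstar1 : star a * star x * star a = star a := by
    have := congrArg star h1
    simpa [star_mul, mul_assoc] using this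
  have hax : star a * a * x = star a := by
    calc star a * a * x = star a * (a * x) := by rw [mul_assoc]
    _ = star a * star (a * x) := by rw [h4]
    _ = star a * (star x * star a) := by rw [star_mul]
    _ = star a := by rw [← mul_assoc]; exact hstar1
  have hxa : x * a * star a = star a := by
    calc x * a * star a = star (x * a) * star a := by rw [h3]
    _ = star a * star x * star a := by rw [star_mul]
    _ = star a := hstar1
  have haxstar : a * star a * star x = a := by
    calc a * star a * star x = a * (star a * star x) := by rw [mul_assoc]
    _ = a * star (x * a) := by rw [star_mul]
    _ = a * (x * a) := by rw [h3]
    _ = a := by rw [← mul_assoc]; exact h1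
  have hstarxa : star x * star a * a = a := by
    calc star x * star a * a = star (a * x) * a := by rw [star_mul]
    _ = a * x * a := by rw [h4]
    _ = a := h1
  -- (star a * a)† = x * star x
  have hmp1 : IsMP (star a * a) (x * star x) := by
    refine ⟨?_, ?_, ?_, ?_⟩
    · calc star a * a * (x * star x) * (star a * a)
          = (star a * a * x) * (star x * star a) * a := by simp [mul_assoc]
      _ = star a * (star x * star a) * a := by rw [hax]
      _ = (star a * star x * star a) * a := by simp [mul_assoc]
      _ = star a * a := by rw [hstar1]
    · calc x * star x * (star a * a) * (x * star x)
          = x * (star x * star a * a) * (x * star x) := by simp [mul_assoc]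
      _ = x * a * (x * star x) := by rw [hstarxa]
      _ = (x * a * x) * star x := by simp [mul_assoc]
      _ = x * star x := by rw [h2]
    · have he : x * star x * (star a * a) = x * a := by
        calc x * star x * (star a * a)
            = x * (star x * star a * a) := by simp [mul_assoc]
        _ = x * a := by rw [hstarxa]
      rw [he, h3]
    · have he : star a * a * (x * star x) = x * a := by
        calc star a * a * (x * star x)
            = (star a * a * x) * star x := by simp [mul_assoc]
        _ = star a * star x := by rw [hax]
        _ = star (x * a) := (star_mul ..).symm
        _ = x * a := h3
      rw [he, h3]
  -- (a * star a)† = star x * x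
  have hmp2 : IsMP (a * star a) (star x * x) := by
    refine ⟨?_, ?_, ?_, ?_⟩
    · calc a * star a * (star x * x) * (a * star a)
          = (a * star a * star x) * (x * a * star a) := by simp [mul_assoc]
      _ = a * (x * a * star a) := by rw [haxstar]
      _ = a * star a := by rw [hxa]
    · calc star x * x * (a * star a) * (star x * x)
          = star x * (x * a * star a) * (star x * x) := by simp [mul_assoc]
      _ = star x * star a * (star x * x) := by rw [hxa]
      _ = (star x * star a * star x) * x := by simp [mul_assoc]
      _ = star x * x := by
            have := congrArg star h2
            simp only [star_mul, ← mul_assoc] at this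
            rw [this]
    · have he : star x * x * (a * star a) = a * x := by
        calc star x * x * (a * star a)
            = star x * (x * a * star a) := by simp [mul_assoc]
        _ = star x * star a := by rw [hxa]
        _ = star (a * x) := (star_mul ..).symm
        _ = a * x := h4
      rw [he, h4]
    · have he : a * star a * (star x * x) = a * x := by
        calc a * star a * (star x * x)
            = (a * star a * star x) * x := by simp [mul_assoc]
        _ = a * x := by rw [haxstar]
      rw [he, h4]
  -- by uniqueness, x * star x = star x * x
  have hxx : x * star x = star x * x := by
    have hmp2' : IsMP (star a * a) (star x * x) := by rwa [← hn]
    exact mp_unique hmp1 hmp2'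
  -- now a * x = a * star a * (star x * x) = star a * a * (x * star x) = x * a
  have e1 : a * star a * (star x * x) = a * x := by
    calc a * star a * (star x * x)
        = (a * star a * star x) * x := by simp [mul_assoc]
    _ = a * x := by rw [haxstar]
  have e2 : star a * a * (x * star x) = x * a := by
    calc star a * a * (x * star x)
        = (star a * a * x) * star x := by simp [mul_assoc]
    _ = star a * star x := by rw [hax]
    _ = star (x * a) := (star_mul ..).symm
    _ = x * a := h3
  calc a * x = a * star a * (star x * x) := e1.symm
  _ = star a * a * (x * star x) := by rw [hn, hxx]
  _ = x * a := e2

end Aux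

variable {A : Type*} [NormedRing A] [StarRing A] [CStarRing A] [CompleteSpace A]
  [NormedAlgebra ℂ A] [StarModule ℂ A]

theorem stmt14 (b bd : A) (hb : IsMP b bd) (hn : b * star b = star b * b) :
    ∀ n : ℕ, IsMP (b ^ n) (bd ^ n) := by
  have hcomm : b * bd = bd * b := mp_comm_s14 hb hn
  obtain ⟨h1, h2, h3, h4⟩ := hb
  intro n
  rcases n with _ | m
  · exact ⟨by simp, by simp, by simp, by simp⟩
  have hpow : b ^ (m + 1) * bd ^ (m + 1) = b * bd := by
    induction m with
    | zero => simp
    | succ j ih =>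
      calc b ^ (j + 2) * bd ^ (j + 2)
          = b * (b ^ (j + 1) * bd ^ (j + 1)) * bd := by
            rw [pow_succ' b, pow_succ bd]; simp [mul_assoc]
      _ = b * (b * bd) * bd := by rw [ih]
      _ = b * (bd * b) * bd := by rw [hcomm]
      _ = (b * bd * b) * bd := by simp [mul_assoc]
      _ = b * bd := by rw [h1]
  have hpow' : bd ^ (m + 1) * b ^ (m + 1) = b * bd := by
    have hC : Commute b bd := hcomm
    calc bd ^ (m + 1) * b ^ (m + 1) = (bd * b) ^ (m + 1) := (hC.symm.mul_pow _).symm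
    _ = (b * bd) ^ (m + 1) := by rw [hcomm]
    _ = b ^ (m + 1) * bd ^ (m + 1) := hC.mul_pow _
    _ = b * bd := hpow
  have heb : b * bd * b ^ (m + 1) = b ^ (m + 1) := by
    calc b * bd * b ^ (m + 1) = (b * bd * b) * b ^ m := by
          rw [pow_succ' b]; simp [mul_assoc]
    _ = b ^ (m + 1) := by rw [h1, pow_succ']
  have hebd : b * bd * bd ^ (m + 1) = bd ^ (m + 1) := by
    calc b * bd * bd ^ (m + 1) = (b * bd * bd) * bd ^ m := by
          rw [pow_succ' bd]; simp [mul_assoc]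
    _ = (bd * b * bd) * bd ^ m := by rw [hcomm]
    _ = bd ^ (m + 1) := by rw [h2, pow_succ']
  exact ⟨by rw [hpow, heb], by rw [hpow', hebd], by rw [hpow', h4], by rw [hpow, h4]⟩
end

section
/- Let (a₁,…,aₙ) be a commuting n-tuple of Moore-Penrose invertible normal elements in a C*-algebra and let (m₁,…,mₙ) be nonnegative integers. Then ∏ᵢ aᵢ^{mᵢ} is Moore-Penrose invertible and (∏ᵢ aᵢ^{mᵢ})† = ∏ᵢ (aᵢ†)^{mᵢ}. -/
section RingLemmas

variable {R : Type*} [Ring R] [StarRing R]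

lemma isMP_one : IsMP (1 : R) 1 := by simp [IsMP]

lemma mp_unique_s15 {a b c : R} (hb : IsMP a b) (hc : IsMP a c) : b = c := by
  obtain ⟨hb1, hb2, hb3, hb4⟩ := hb
  obtain ⟨hc1, hc2, hc3, hc4⟩ := hc
  have sb4 : star b * star a = a * b := by rw [← star_mul, hb4]
  have sb3 : star a * star b = b * a := by rw [← star_mul, hb3]
  have sc4 : star c * star a = a * c := by rw [← star_mul, hc4]
  have sc3 : star a * star c = c * a := by rw [← star_mul, hc3]
  have hstar_a : star a = star a * star b * star a := by
    conv_lhs => rw [← hb1]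
    simp only [star_mul]
    noncomm_ring
  have hab : a * b = a * c := by
    have e2 : a * c = (a * c) * (a * b) := by
      calc a * c = star c * star a := sc4.symm
        _ = star c * (star a * star b * star a) := by rw [← hstar_a]
        _ = (star c * star a) * (star b * star a) := by noncomm_ring
        _ = (a * c) * (a * b) := by rw [sc4, sb4]
    have k1 : a * b = (a * c) * (a * b) := by
      calc a * b = (a * c * a) * b := by rw [hc1]
        _ = (a * c) * (a * b) := by noncomm_ring
    exact k1.trans e2.symm
  have hba : b * a = c * a := by
    have e2 : c * a = (b * a) * (c * a) := by
      calc c * a = star a * star c := sc3.symm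
        _ = (star a * star b * star a) * star c := by rw [← hstar_a]
        _ = (star a * star b) * (star a * star c) := by noncomm_ring
        _ = (b * a) * (c * a) := by rw [sb3, sc3]
    have k1 : b * a = (b * a) * (c * a) := by
      calc b * a = b * (a * c * a) := by rw [hc1]
        _ = (b * a) * (c * a) := by noncomm_ring
    exact k1.trans e2.symm
  calc b = b * a * b := hb2.symm
    _ = (c * a) * b := by rw [hba]
    _ = c * (a * b) := by noncomm_ring
    _ = c * (a * c) := by rw [hab]
    _ = c * a * c := by noncomm_ring
    _ = c := hc2

/-- If commuting pairs with full cross-commutation, products form an MP pair. -/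
lemma mp_mul {x y u v : R} (h1 : IsMP x y) (h2 : IsMP u v)
    (cxu : Commute x u) (cxv : Commute x v) (cyu : Commute y u) (cyv : Commute y v) :
    IsMP (x * u) (y * v) := by
  obtain ⟨a1, a2, a3, a4⟩ := h1
  obtain ⟨b1, b2, b3, b4⟩ := h2
  have key1 : (x * u) * (y * v) = (x * y) * (u * v) := cyu.symm.mul_mul_mul_comm x v
  have key2 : (y * v) * (x * u) = (y * x) * (v * u) := cxv.symm.mul_mul_mul_comm y u
  have cXuv : Commute x (u * v) := cxu.mul_right cxv
  have cYuv : Commute y (u * v) := cyu.mul_right cyv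
  have cXvu : Commute x (v * u) := cxv.mul_right cxu
  have cYvu : Commute y (v * u) := cyv.mul_right cyu
  refine ⟨?_, ?_, ?_, ?_⟩
  · calc (x * u) * (y * v) * (x * u) = ((x * y) * (u * v)) * (x * u) := by rw [key1]
      _ = ((x * y) * x) * ((u * v) * u) := cXuv.symm.mul_mul_mul_comm (x * y) u
      _ = (x * y * x) * (u * v * u) := by noncomm_ring
      _ = x * u := by rw [a1, b1]
  · calc (y * v) * (x * u) * (y * v) = ((y * x) * (v * u)) * (y * v) := by rw [key2]
      _ = ((y * x) * y) * ((v * u) * v) := cYvu.symm.mul_mul_mul_comm (y * x) v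
      _ = (y * x * y) * (v * u * v) := by noncomm_ring
      _ = y * v := by rw [a2, b2]
  · calc star ((y * v) * (x * u)) = star ((y * x) * (v * u)) := by rw [key2]
      _ = star (v * u) * star (y * x) := star_mul _ _
      _ = (v * u) * (y * x) := by rw [b3, a3]
      _ = (y * x) * (v * u) := (Commute.mul_left cYvu cXvu).eq.symm
      _ = (y * v) * (x * u) := key2.symm
  · calc star ((x * u) * (y * v)) = star ((x * y) * (u * v)) := by rw [key1]
      _ = star (u * v) * star (x * y) := star_mul _ _
      _ = (u * v) * (x * y) := by rw [b4, a4]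
      _ = (x * y) * (u * v) := (Commute.mul_left cXuv cYuv).eq.symm
      _ = (x * u) * (y * v) := key1.symm

lemma mp_pow {x y : R} (h : IsMP x y) (hc : Commute x y) : ∀ m : ℕ, IsMP (x ^ m) (y ^ m)
  | 0 => by simpa using (isMP_one (R := R))
  | (m + 1) => by
      rw [pow_succ', pow_succ']
      exact mp_mul h (mp_pow h hc m) ((Commute.refl x).pow_right m) (hc.pow_right m)
        (hc.symm.pow_right m) ((Commute.refl y).pow_right m)

lemma mp_ep {a b : R} (h : IsMP a b) (hn : a * star a = star a * a) :
    a * b = b * a ∧ b * star b = star b * b := by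
  obtain ⟨h1, h2, h3, h4⟩ := h
  have sb3 : star a * star b = b * a := by rw [← star_mul, h3]
  have sb4 : star b * star a = a * b := by rw [← star_mul, h4]
  have hp2 : (a * b) * (a * b) = a * b := by
    calc (a * b) * (a * b) = (a * b * a) * b := by noncomm_ring
      _ = a * b := by rw [h1]
  have hq2 : (b * a) * (b * a) = b * a := by
    calc (b * a) * (b * a) = b * (a * b * a) := by noncomm_ring
      _ = b * a := by rw [h1]
  have hsa1 : star a * (a * b) = star a := by
    calc star a * (a * b) = star a * (star b * star a) := by rw [sb4]
      _ = star ((a * b) * a) := by rw [star_mul, star_mul]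
      _ = star a := by rw [h1]
  have hsa2 : (b * a) * star a = star a := by
    calc (b * a) * star a = (star a * star b) * star a := by rw [sb3]
      _ = star (a * (b * a)) := by rw [star_mul a (b*a), star_mul b a]; try noncomm_ring
      _ = star a := by rw [show a * (b * a) = a from by rw [← mul_assoc, h1]]
  have sub2 : IsMP (star a * a) (b * star b) := by
    refine ⟨?_, ?_, ?_, ?_⟩
    · calc (star a * a) * (b * star b) * (star a * a)
          = star a * ((a * b) * (star b * star a)) * a := by noncomm_ring
        _ = star a * ((a * b) * (a * b)) * a := by rw [sb4]
        _ = (star a * (a * b)) * a := by rw [hp2]; try noncomm_ring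
        _ = star a * a := by rw [hsa1]
    · calc (b * star b) * (star a * a) * (b * star b)
          = b * ((star b * star a) * (a * b)) * star b := by noncomm_ring
        _ = b * ((a * b) * (a * b)) * star b := by rw [sb4]
        _ = (b * a * b) * star b := by rw [hp2]; try noncomm_ring
        _ = b * star b := by rw [h2]
    · have key : (b * star b) * (star a * a) = b * a := by
        calc (b * star b) * (star a * a) = b * ((star b * star a) * a) := by noncomm_ring
          _ = b * ((a * b) * a) := by rw [sb4]
          _ = b * a := by rw [show (a*b)*a = a from h1]
      rw [key, h3]
    · have key : (star a * a) * (b * star b) = b * a := by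
        calc (star a * a) * (b * star b) = (star a * (a * b)) * star b := by noncomm_ring
          _ = star a * star b := by rw [hsa1]
          _ = b * a := sb3
      rw [key, h3]
  have hP4 : (star a * a) * (b * star b) = b * a := by
    calc (star a * a) * (b * star b) = (star a * (a * b)) * star b := by noncomm_ring
      _ = star a * star b := by rw [hsa1]
      _ = b * a := sb3
  have sub3 : IsMP (a * star a) (star b * b) := by
    refine ⟨?_, ?_, ?_, ?_⟩
    · calc (a * star a) * (star b * b) * (a * star a)
          = a * ((star a * star b) * (b * a)) * star a := by noncomm_ring
        _ = a * ((b * a) * (b * a)) * star a := by rw [sb3]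
        _ = (a * (b * a)) * star a := by rw [hq2]; try noncomm_ring
        _ = a * star a := by rw [show a * (b * a) = a from by rw [← mul_assoc, h1]]
    · calc (star b * b) * (a * star a) * (star b * b)
          = star b * ((b * a) * (star a * star b)) * b := by noncomm_ring
        _ = star b * ((b * a) * (b * a)) * b := by rw [sb3]
        _ = star b * (b * a * b) := by rw [hq2]; try noncomm_ring
        _ = star b * b := by rw [h2]
    · have key : (star b * b) * (a * star a) = a * b := by
        calc (star b * b) * (a * star a) = star b * ((b * a) * star a) := by noncomm_ring
          _ = star b * star a := by rw [hsa2]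
          _ = a * b := sb4
      rw [key, h4]
    · have key : (a * star a) * (star b * b) = a * b := by
        calc (a * star a) * (star b * b) = a * ((star a * star b) * b) := by noncomm_ring
          _ = a * ((b * a) * b) := by rw [sb3]
          _ = a * b := by rw [show (b*a)*b = b from h2]
      rw [key, h4]
  have hQ4 : (a * star a) * (star b * b) = a * b := by
    calc (a * star a) * (star b * b) = a * ((star a * star b) * b) := by noncomm_ring
      _ = a * ((b * a) * b) := by rw [sb3]
      _ = a * b := by rw [show (b*a)*b = b from h2]
  have sub2' : IsMP (a * star a) (b * star b) := by rw [hn]; exact sub2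
  have huv : b * star b = star b * b := mp_unique_s15 sub2' sub3
  refine ⟨?_, huv⟩
  calc a * b = (a * star a) * (star b * b) := hQ4.symm
    _ = (star a * a) * (b * star b) := by rw [hn, ← huv]
    _ = b * a := hP4

lemma mp_commutant {a b c : R} (h : IsMP a b) (hep : a * b = b * a)
    (hca : c * a = a * c) (hcs : c * star a = star a * c) : c * b = b * c := by
  obtain ⟨h1, h2, h3, h4⟩ := h
  have hca' : star c * a = a * star c := by
    have := congrArg star hcs
    simp only [star_mul, star_star] at this
    exact this.symm
  have gen : ∀ d : R, d * a = a * d → (a * b) * (d * (a * b)) = d * (a * b) := by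
    intro d hd
    calc (a * b) * (d * (a * b)) = (a * b) * ((d * a) * b) := by noncomm_ring
      _ = (a * b) * ((a * d) * b) := by rw [hd]
      _ = ((a * b) * a) * (d * b) := by noncomm_ring
      _ = a * (d * b) := by rw [h1]
      _ = (a * d) * b := by noncomm_ring
      _ = (d * a) * b := by rw [hd]
      _ = d * (a * b) := by noncomm_ring
  have stepc : (a * b) * (c * (a * b)) = c * (a * b) := gen c hca
  have stepcs : (a * b) * (star c * (a * b)) = star c * (a * b) := gen (star c) hca'
  have l1 : star ((a * b) * (star c * (a * b))) = ((a * b) * c) * (a * b) := by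
    rw [star_mul (a * b) (star c * (a * b)), star_mul (star c) (a * b), star_star, h4]
  have l2 : star (star c * (a * b)) = (a * b) * c := by
    rw [star_mul, star_star, h4]
  have step2 : ((a * b) * c) * (a * b) = (a * b) * c := by
    rw [← l1, ← l2, stepcs]
  have step3 : (a * b) * c = c * (a * b) := by
    calc (a * b) * c = ((a * b) * c) * (a * b) := step2.symm
      _ = (a * b) * (c * (a * b)) := by noncomm_ring
      _ = c * (a * b) := stepc
  have hbe : b * (a * b) = b := by rw [← mul_assoc, h2]
  have final : b * c = c * b := by
    calc b * c = (b * (a * b)) * c := by rw [hbe]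
      _ = b * ((a * b) * c) := by noncomm_ring
      _ = b * (c * (a * b)) := by rw [step3]
      _ = b * ((c * a) * b) := by noncomm_ring
      _ = b * ((a * c) * b) := by rw [hca]
      _ = ((b * a) * c) * b := by noncomm_ring
      _ = ((a * b) * c) * b := by rw [hep]
      _ = (c * (a * b)) * b := by rw [step3]
      _ = (c * (b * a)) * b := by rw [hep]
      _ = c * ((b * a) * b) := by noncomm_ring
      _ = c * b := by rw [h2]
  exact final.symm

end RingLemmas

open NormedSpace

variable {A : Type*} [NormedRing A] [StarRing A] [CStarRing A] [CompleteSpace A]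
  [NormedAlgebra ℂ A] [StarModule ℂ A]

noncomputable instance instNormedAlgebraRatOfComplex : NormedAlgebra ℚ A :=
  NormedAlgebra.restrictScalars ℚ ℂ A

private lemma expinv1 (y : A) : exp y * exp (-y) = 1 := by
  rw [← exp_add_of_commute (Commute.refl y).neg_right, add_neg_cancel, exp_zero]

private lemma expinv2 (y : A) : exp (-y) * exp y = 1 := by
  rw [← exp_add_of_commute (Commute.refl y).neg_left, neg_add_cancel, exp_zero]

private lemma norm_exp_skew {y : A} (hy : star y = -y) :
    ‖exp y‖ = Real.sqrt ‖(1 : A)‖ := by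
  have h1 : star (exp y) * exp y = 1 := by
    rw [star_exp, hy, expinv2]
  have h2 := CStarRing.norm_star_mul_self (x := exp y)
  rw [h1] at h2
  rw [h2, Real.sqrt_mul_self (norm_nonneg _)]

theorem myFuglede {N T : A} (hN : N * star N = star N * N) (hNT : N * T = T * N) :
    star N * T = T * star N := by
  have hNx : Commute N (star N) := hN
  have hsN : Commute (star N) N := hNx.symm
  have hcN : Commute N T := hNT
  have hcomm : ∀ c : ℂ, exp (c • N) * T = T * exp (c • N) := fun c =>
    ((hcN.smul_left c).exp_left)
  set x := star N with hx
  set s : ℂ → A := fun z => z • x + (-((starRingEnd ℂ z) • N)) with hs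
  have hstar_s : ∀ z, star (s z) = -(s z) := by
    intro z
    simp only [hs, star_add, star_neg, star_smul, hx, star_star, Complex.star_def,
      Complex.conj_conj, neg_add_rev, neg_neg]
    try abel
  have hexp_s : ∀ z, exp (s z) = exp (z • x) * exp (-((starRingEnd ℂ z) • N)) := by
    intro z
    exact exp_add_of_commute (((hsN.smul_left z).smul_right _).neg_right)
  have hexp_negs : ∀ z,
      exp (-(s z)) = exp ((starRingEnd ℂ z) • N) * exp (-(z • x)) := by
    intro z
    have h : -(s z) = (starRingEnd ℂ z) • N + (-(z • x)) := by simp only [hs, neg_add_rev, neg_neg]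
    rw [h, exp_add_of_commute (((hsN.smul_left z).smul_right _).symm.neg_right)]
  set F : ℂ → A := fun z => exp (z • x) * T * exp (-(z • x)) with hF
  have hFs : ∀ z, F z = exp (s z) * T * exp (-(s z)) := by
    intro z
    rw [hexp_s, hexp_negs]
    symm
    have h1 : exp (-((starRingEnd ℂ z) • N)) * T = T * exp (-((starRingEnd ℂ z) • N)) := by
      have := hcomm (-(starRingEnd ℂ z))
      rwa [neg_smul] at this
    have h2 : exp (-((starRingEnd ℂ z) • N)) * exp ((starRingEnd ℂ z) • N) = 1 :=
      expinv2 _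
    calc exp (z • x) * exp (-((starRingEnd ℂ z) • N)) * T *
            (exp ((starRingEnd ℂ z) • N) * exp (-(z • x)))
        = exp (z • x) * (exp (-((starRingEnd ℂ z) • N)) * T *
            exp ((starRingEnd ℂ z) • N)) * exp (-(z • x)) := by noncomm_ring
      _ = exp (z • x) * (T * (exp (-((starRingEnd ℂ z) • N)) *
            exp ((starRingEnd ℂ z) • N))) * exp (-(z • x)) := by rw [h1]; noncomm_ring
      _ = exp (z • x) * T * exp (-(z • x)) := by rw [h2, mul_one]
  have hFdiff : Differentiable ℂ F := by
    have d1 : Differentiable ℂ fun z : ℂ => exp (z • x) :=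
      fun z => (hasDerivAt_exp_smul_const (𝕂 := ℂ) x z).differentiableAt
    have d2 : Differentiable ℂ fun z : ℂ => exp (-(z • x)) := by
      have h := d1.comp (differentiable_id.neg (𝕜 := ℂ) (f := fun z : ℂ => z))
      simpa [Function.comp_def, neg_smul] using h
    exact (d1.mul (differentiable_const T)).mul d2
  have hFbdd : Bornology.IsBounded (Set.range F) := by
    rw [isBounded_iff_forall_norm_le]
    refine ⟨Real.sqrt ‖(1 : A)‖ * ‖T‖ * Real.sqrt ‖(1 : A)‖, ?_⟩
    rintro _ ⟨z, rfl⟩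
    rw [hFs]
    have hn1 : ‖exp (s z)‖ = Real.sqrt ‖(1 : A)‖ := norm_exp_skew (hstar_s z)
    have hn2 : ‖exp (-(s z))‖ = Real.sqrt ‖(1 : A)‖ := by
      refine norm_exp_skew ?_
      rw [star_neg, hstar_s, neg_neg]
    calc ‖exp (s z) * T * exp (-(s z))‖
        ≤ ‖exp (s z) * T‖ * ‖exp (-(s z))‖ := norm_mul_le _ _
      _ ≤ ‖exp (s z)‖ * ‖T‖ * ‖exp (-(s z))‖ := by
          gcongr; exact norm_mul_le _ _
      _ = Real.sqrt ‖(1 : A)‖ * ‖T‖ * Real.sqrt ‖(1 : A)‖ := by rw [hn1, hn2]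
  -- Liouville
  have hconst : ∀ z, F z = F 0 := fun z => hFdiff.apply_eq_apply_of_bounded hFbdd z 0
  have hF0 : F 0 = T := by
    simp [hF]
  have hkey : ∀ z : ℂ, exp (z • x) * T = T * exp (z • x) := by
    intro z
    have h := (hconst z).trans hF0
    have := congrArg (fun w => w * exp (z • x)) h
    simp only [hF] at this
    rwa [mul_assoc (exp (z • x) * T), expinv2, mul_one] at this
  -- differentiate at 0
  have hG : HasDerivAt (fun z : ℂ => exp (z • x) * T) (exp ((0:ℂ) • x) * x * T) 0 :=
    (hasDerivAt_exp_smul_const (𝕂 := ℂ) x 0).mul_const T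
  have hH : HasDerivAt (fun z : ℂ => exp (z • x) * T) (T * (exp ((0:ℂ) • x) * x)) 0 := by
    have h := HasDerivAt.const_mul T (hasDerivAt_exp_smul_const (𝕂 := ℂ) x 0)
    exact h.congr_of_eventuallyEq (Filter.Eventually.of_forall fun z => (hkey z))
  have := hG.unique hH
  rw [zero_smul, exp_zero, one_mul] at this
  exact this

section ProdLemma

variable {R : Type*} [Ring R] [StarRing R]

lemma mp_prod : ∀ (n : ℕ) (a ad : Fin n → R) (m : Fin n → ℕ),
    (∀ i, IsMP (a i) (ad i)) →
    (∀ i, Commute (a i) (ad i)) →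
    (∀ i j, i ≠ j → Commute (a i) (a j)) →
    (∀ i j, i ≠ j → Commute (a i) (ad j)) →
    (∀ i j, i ≠ j → Commute (ad i) (ad j)) →
    IsMP (List.ofFn fun i => a i ^ m i).prod (List.ofFn fun i => ad i ^ m i).prod := by
  intro n
  induction n with
  | zero => intro a ad m _ _ _ _ _; simpa using (isMP_one (R := R))
  | succ k IH =>
    intro a ad m h hepc hCaa hCav hCuv
    rw [List.ofFn_succ, List.ofFn_succ, List.prod_cons, List.prod_cons]
    have hIH := IH (fun i => a i.succ) (fun i => ad i.succ) (fun i => m i.succ)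
      (fun i => h i.succ) (fun i => hepc i.succ)
      (fun i j hij => hCaa i.succ j.succ (fun e => hij (Fin.succ_injective _ e)))
      (fun i j hij => hCav i.succ j.succ (fun e => hij (Fin.succ_injective _ e)))
      (fun i j hij => hCuv i.succ j.succ (fun e => hij (Fin.succ_injective _ e)))
    refine mp_mul (mp_pow (h 0) (hepc 0) (m 0)) hIH ?_ ?_ ?_ ?_
    · refine Commute.list_prod_right _ _ ?_
      intro z hz
      rw [List.mem_ofFn] at hz
      obtain ⟨i, rfl⟩ := hz
      exact (hCaa 0 i.succ (Fin.succ_ne_zero i).symm).pow_pow _ _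
    · refine Commute.list_prod_right _ _ ?_
      intro z hz
      rw [List.mem_ofFn] at hz
      obtain ⟨i, rfl⟩ := hz
      exact (hCav 0 i.succ (Fin.succ_ne_zero i).symm).pow_pow _ _
    · refine Commute.list_prod_right _ _ ?_
      intro z hz
      rw [List.mem_ofFn] at hz
      obtain ⟨i, rfl⟩ := hz
      exact ((hCav i.succ 0 (Fin.succ_ne_zero i)).symm).pow_pow _ _
    · refine Commute.list_prod_right _ _ ?_
      intro z hz
      rw [List.mem_ofFn] at hz
      obtain ⟨i, rfl⟩ := hz
      exact (hCuv 0 i.succ (Fin.succ_ne_zero i).symm).pow_pow _ _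

end ProdLemma

theorem stmt15 {n : ℕ} (a ad : Fin n → A) (m : Fin n → ℕ)
    (h : ∀ i, IsMP (a i) (ad i))
    (hnorm : ∀ i, a i * star (a i) = star (a i) * a i)
    (hc : ∀ i j, i ≠ j → a i * a j = a j * a i) :
    IsMP (List.ofFn fun i => a i ^ m i).prod (List.ofFn fun i => ad i ^ m i).prod := by
  have hep : ∀ i, a i * ad i = ad i * a i := fun i => (mp_ep (h i) (hnorm i)).1
  have hFP : ∀ i j, i ≠ j → star (a i) * a j = a j * star (a i) :=
    fun i j hij => myFuglede (hnorm i) (hc i j hij)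
  have hCav : ∀ i j, i ≠ j → Commute (a i) (ad j) := fun i j hij =>
    mp_commutant (h j) (hep j) (hc i j hij) (hFP j i hij.symm).symm
  have hCsv : ∀ i j, i ≠ j → Commute (star (a i)) (ad j) := by
    intro i j hij
    refine mp_commutant (h j) (hep j) (hFP i j hij) ?_
    have := congrArg star (hc j i hij.symm)
    simpa [star_mul] using this
  have hCuv : ∀ i j, i ≠ j → Commute (ad i) (ad j) := fun i j hij =>
    mp_commutant (h j) (hep j) ((hCav j i hij.symm).symm) ((hCsv j i hij.symm).symm)
  exact mp_prod n a ad m h (fun i => hep i) (fun i j hij => hc i j hij) hCav hCuv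
end

section
/- If a and b are commuting normal Moore-Penrose invertible elements of a C*-algebra, then a b* is Moore-Penrose invertible and (a b*)† = (b†)* a† = a† (b†)*. -/
open NormedSpace

set_option linter.unusedSectionVars false
set_option maxHeartbeats 1000000

section helpers
variable {R : Type*} [Ring R] [StarRing R]

lemma mul_left_comm_of {x y : R} (h : x * y = y * x) (t : R) :
    x * (y * t) = y * (x * t) := by rw [← mul_assoc, h, mul_assoc]

lemma star_swap {x y : R} (h : x * y = y * x) :
    star y * star x = star x * star y := by
  rw [← star_mul, h, star_mul]

lemma star_comm_star {x y : R} (h : star x * y = y * star x) :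
    star y * x = x * star y := by
  have h2 := star_swap h
  rwa [star_star] at h2

/-- If `x` and `star x` commute with `a` and `star a`, then `x` commutes with
any Moore-Penrose inverse of `a`. -/
lemma mp_commute {a ad : R} (h : IsMP a ad)
    (x : R) (h1 : x * a = a * x) (h2 : x * star a = star a * x)
    (h3 : star x * a = a * star x) (h4 : star x * star a = star a * star x) :
    x * ad = ad * x := by
  obtain ⟨p1, p2, p3, p4⟩ := h
  have r1 : ∀ t, x * (a * t) = a * (x * t) := fun t => by rw [← mul_assoc, h1, mul_assoc]
  have r3 : ∀ t, star x * (a * t) = a * (star x * t) := fun t => by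
    rw [← mul_assoc, h3, mul_assoc]
  have q1 : ∀ t, a * (ad * (a * t)) = a * t := fun t => by
    rw [← mul_assoc, ← mul_assoc, p1]
  have t1 : a * (ad * a) = a := by rw [← mul_assoc, p1]
  have t2 : ad * (a * ad) = ad := by rw [← mul_assoc, p2]
  have e4 : star ad * star a = a * ad := by rw [← star_mul, p4]
  have e3 : star a * star ad = ad * a := by rw [← star_mul, p3]
  have p4c : ∀ t, star ad * (star a * t) = a * (ad * t) := fun t => by
    rw [← mul_assoc, e4, mul_assoc]
  have p3c : ∀ t, star a * (star ad * t) = ad * (a * t) := fun t => by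
    rw [← mul_assoc, e3, mul_assoc]
  have hA : a * (ad * (x * (a * ad))) = x * (a * ad) := by rw [r1, q1]
  have hB : a * (ad * (star x * (a * ad))) = star x * (a * ad) := by rw [r3, q1]
  have hB' := congrArg star hB
  simp only [star_mul, star_star, mul_assoc, e4, p4c] at hB'
  have keyB : x * (a * ad) = a * (ad * x) := hA.symm.trans hB'
  have hC : ad * (a * (x * (ad * a))) = ad * (a * x) := by rw [← r1, t1, h1]
  have hD : ad * (a * (star x * (ad * a))) = ad * (a * star x) := by rw [← r3, t1, h3]
  have hD' := congrArg star hD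
  simp only [star_mul, star_star, mul_assoc, e3, p3c] at hD'
  have keyC : ad * (a * x) = x * (ad * a) := hC.symm.trans hD'
  calc x * ad
      = x * (ad * (a * ad)) := by rw [t2]
    _ = x * (ad * a) * ad := by simp only [mul_assoc]
    _ = ad * (a * x) * ad := by rw [← keyC]
    _ = ad * (a * (x * ad)) := by simp only [mul_assoc]
    _ = ad * (x * (a * ad)) := by rw [← r1]
    _ = ad * (a * (ad * x)) := by rw [keyB]
    _ = ad * (a * ad) * x := by simp only [mul_assoc]
    _ = ad * x := by rw [t2]

end helpers

/-- Fuglede's theorem: if `a` is normal and commutes with `b`, then `star a`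
commutes with `b`. -/
lemma fuglede {A : Type*} [NormedRing A] [StarRing A] [CStarRing A] [CompleteSpace A]
    [NormedAlgebra ℂ A] [StarModule ℂ A] {a b : A}
    (hna : a * star a = star a * a) (hc : a * b = b * a) :
    star a * b = b * star a := by
  let +nondep : NormedAlgebra ℚ A := .restrictScalars ℚ ℂ A
  have hnorm1 : ‖(1 : A)‖ ≤ 1 := by
    have h : ‖(1 : A)‖ * ‖(1 : A)‖ = ‖(1 : A)‖ := by
      rw [← CStarRing.norm_star_mul_self (x := (1 : A)), star_one, one_mul]
    nlinarith [norm_nonneg (1 : A)]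
  have skew_norm : ∀ u : A, star u = -u → ‖exp u‖ ≤ 1 := by
    intro u hu
    have h1 : exp (-u) * exp u = 1 := by
      rw [← exp_add_of_commute ((Commute.refl u).neg_left), neg_add_cancel, exp_zero]
    have h2 : ‖exp u‖ * ‖exp u‖ = ‖(1 : A)‖ := by
      rw [← CStarRing.norm_star_mul_self (x := exp u), star_exp, hu, h1]
    nlinarith [norm_nonneg (exp u)]
  have hca : Commute a (star a) := hna
  have hab : Commute a b := hc
  have f_diff : Differentiable ℂ
      (fun z : ℂ => exp (z • star a) * b * exp (z • (-star a))) := by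
    have d1 : Differentiable ℂ (fun z : ℂ => exp (z • star a)) :=
      fun z => (hasDerivAt_exp_smul_const (star a) z).differentiableAt
    have d2 : Differentiable ℂ (fun z : ℂ => exp (z • (-star a))) :=
      fun z => (hasDerivAt_exp_smul_const (-star a) z).differentiableAt
    exact (d1.mul_const b).mul d2
  have key : ∀ z : ℂ, exp (z • star a) * b * exp (z • (-star a))
      = exp (z • star a - (starRingEnd ℂ z) • a) * b
        * exp (-(z • star a - (starRingEnd ℂ z) • a)) := by
    intro z
    set w := z • star a - (starRingEnd ℂ z) • a with hw
    have hcomm1 : Commute w ((starRingEnd ℂ z) • a) :=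
      (((hca.symm.smul_left z).smul_right _).sub_left
        (((Commute.refl a).smul_left _).smul_right _))
    have split1 : exp (z • star a) = exp w * exp ((starRingEnd ℂ z) • a) := by
      rw [← exp_add_of_commute hcomm1, sub_add_cancel]
    have hcomm2 : Commute (-((starRingEnd ℂ z) • a)) (-w) := (hcomm1.symm.neg_left).neg_right
    have split2 : exp (z • (-star a))
        = exp (-((starRingEnd ℂ z) • a)) * exp (-w) := by
      rw [← exp_add_of_commute hcomm2]
      congr 1
      rw [hw, smul_neg]
      abel
    have hb1 : exp ((starRingEnd ℂ z) • a) * b = b * exp ((starRingEnd ℂ z) • a) :=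
      (hab.smul_left _).exp_left
    have hb2 : exp ((starRingEnd ℂ z) • a) * exp (-((starRingEnd ℂ z) • a)) = 1 := by
      rw [← exp_add_of_commute ((Commute.refl _).neg_right), add_neg_cancel, exp_zero]
    rw [split1, split2]
    calc exp w * exp ((starRingEnd ℂ z) • a) * b
          * (exp (-((starRingEnd ℂ z) • a)) * exp (-w))
        = exp w * (exp ((starRingEnd ℂ z) • a) * b)
          * (exp (-((starRingEnd ℂ z) • a)) * exp (-w)) := by rw [mul_assoc (exp w)]
      _ = exp w * (b * exp ((starRingEnd ℂ z) • a))
          * (exp (-((starRingEnd ℂ z) • a)) * exp (-w)) := by rw [hb1]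
      _ = exp w * b *
          (exp ((starRingEnd ℂ z) • a) * exp (-((starRingEnd ℂ z) • a))) * exp (-w) := by
            simp only [mul_assoc]
      _ = exp w * b * exp (-w) := by rw [hb2, mul_one]
  have hbound : ∀ z : ℂ, ‖exp (z • star a) * b * exp (z • (-star a))‖ ≤ ‖b‖ := by
    intro z
    rw [key z]
    set w := z • star a - (starRingEnd ℂ z) • a with hw
    have hskew : star w = -w := by
      rw [hw, star_sub, star_smul, star_smul, star_star, neg_sub]
      simp [RCLike.star_def]
    have h1 := skew_norm w hskew
    have h2 : ‖exp (-w)‖ ≤ 1 := skew_norm (-w) (by rw [star_neg, hskew, neg_neg])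
    calc ‖exp w * b * exp (-w)‖ ≤ ‖exp w * b‖ * ‖exp (-w)‖ := norm_mul_le _ _
      _ ≤ ‖exp w‖ * ‖b‖ * ‖exp (-w)‖ := by
          have := norm_mul_le (exp w) b
          nlinarith [norm_nonneg (exp (-w)), norm_nonneg (exp w * b)]
      _ ≤ 1 * ‖b‖ * 1 := by gcongr
      _ = ‖b‖ := by ring
  have hconst : ∀ z : ℂ, exp (z • star a) * b * exp (z • (-star a)) = b := by
    intro z
    have hbdd : Bornology.IsBounded
        (Set.range fun z : ℂ => exp (z • star a) * b * exp (z • (-star a))) := by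
      rw [isBounded_iff_forall_norm_le]
      exact ⟨‖b‖, by rintro x ⟨z, rfl⟩; exact hbound z⟩
    have h0 := f_diff.apply_eq_apply_of_bounded hbdd z 0
    simpa [zero_smul, exp_zero] using h0
  have hcomm_exp : ∀ z : ℂ, exp (z • star a) * b = b * exp (z • star a) := by
    intro z
    have hmulinv : exp (z • (-star a)) * exp (z • star a) = 1 := by
      rw [← exp_add_of_commute ((((Commute.refl (star a)).neg_left).smul_left z).smul_right z)]
      rw [← smul_add, neg_add_cancel, smul_zero, exp_zero]
    calc exp (z • star a) * b
        = exp (z • star a) * b * (exp (z • (-star a)) * exp (z • star a)) := by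
          rw [hmulinv, mul_one]
      _ = (exp (z • star a) * b * exp (z • (-star a))) * exp (z • star a) := by
          simp only [mul_assoc]
      _ = b * exp (z • star a) := by rw [hconst z]
  have d1 : HasDerivAt (fun z : ℂ => exp (z • star a) * b)
      (exp ((0 : ℂ) • star a) * star a * b) 0 :=
    (hasDerivAt_exp_smul_const (star a) (0 : ℂ)).mul_const b
  have d2 : HasDerivAt (fun z : ℂ => b * exp (z • star a))
      (b * (exp ((0 : ℂ) • star a) * star a)) 0 :=
    (hasDerivAt_exp_smul_const (star a) (0 : ℂ)).const_mul b
  have funeq : (fun z : ℂ => exp (z • star a) * b)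
      = fun z : ℂ => b * exp (z • star a) := funext hcomm_exp
  have hder := d1.unique (funeq ▸ d2)
  simpa [zero_smul, exp_zero] using hder

variable {A : Type*} [NormedRing A] [StarRing A] [CStarRing A] [CompleteSpace A]
  [NormedAlgebra ℂ A] [StarModule ℂ A]

theorem stmt16 (a ad b bd : A) (ha : IsMP a ad) (hb : IsMP b bd)
    (hna : a * star a = star a * a) (hnb : b * star b = star b * b)
    (hc : a * b = b * a) :
    IsMP (a * star b) (star bd * ad) ∧ star bd * ad = ad * star bd := by
  obtain ⟨a1, a2, a3, a4⟩ := ha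
  obtain ⟨b1, b2, b3, b4⟩ := hb
  have ha : IsMP a ad := ⟨a1, a2, a3, a4⟩
  have hb : IsMP b bd := ⟨b1, b2, b3, b4⟩
  -- basic commutations from Fuglede's theorem
  have hba : b * a = a * b := hc.symm
  have hsab : star a * b = b * star a := fuglede hna hc
  have hbsa : b * star a = star a * b := hsab.symm
  have hsba : star b * a = a * star b := fuglede hnb hc.symm
  have hsbsa : star b * star a = star a * star b := by
    rw [← star_mul, hc, star_mul]
  -- Moore-Penrose inverses commute with everything in sight
  have cb_ad : b * ad = ad * b := mp_commute ha b hba hbsa hsba hsbsa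
  have csb_ad : star b * ad = ad * star b :=
    mp_commute ha (star b) hsba hsbsa (by rw [star_star]; exact hba)
      (by rw [star_star]; exact hbsa)
  have ca_bd : a * bd = bd * a :=
    mp_commute hb a hc hsba.symm hsab hsbsa.symm
  have csa_bd : star a * bd = bd * star a :=
    mp_commute hb (star a) hsab hsbsa.symm (by rw [star_star]; exact hc)
      (by rw [star_star]; exact hsba.symm)
  have csbd_a : star bd * a = a * star bd := star_comm_star csa_bd
  have csbd_sa : star bd * star a = star a * star bd := star_swap ca_bd
  have cbd_ad : bd * ad = ad * bd :=
    mp_commute ha bd ca_bd.symm csa_bd.symm csbd_a csbd_sa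
  have csbd_ad : star bd * ad = ad * star bd :=
    mp_commute ha (star bd) csbd_a csbd_sa (by rw [star_star]; exact ca_bd.symm)
      (by rw [star_star]; exact csa_bd.symm)
  have csad_b : b * star ad = star ad * b := (star_comm_star csb_ad).symm
  have csad_bd : bd * star ad = star ad * bd := (star_comm_star csbd_ad).symm
  have csad_sb : star b * star ad = star ad * star b := (star_swap cb_ad).symm
  have csad_sbd : star bd * star ad = star ad * star bd := (star_swap cbd_ad).symm
  -- star versions of Penrose identities
  have e4a : star ad * star a = a * ad := by rw [← star_mul, a4]
  have e3a : star a * star ad = ad * a := by rw [← star_mul, a3]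
  have e4a' : ∀ t, star ad * (star a * t) = a * (ad * t) := fun t => by
    rw [← mul_assoc, e4a, mul_assoc]
  have e3a' : ∀ t, star a * (star ad * t) = ad * (a * t) := fun t => by
    rw [← mul_assoc, e3a, mul_assoc]
  have Sb1 : star bd * star b = b * bd := by rw [← star_mul, b4]
  have Sb2 : star b * star bd = bd * b := by rw [← star_mul, b3]
  have Psb1 : star b * (star bd * star b) = star b := by
    have hh := congrArg star b1
    rwa [star_mul, star_mul] at hh
  have Psbd2 : star bd * (star b * star bd) = star bd := by
    have hh := congrArg star b2
    rwa [star_mul, star_mul] at hh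
  have Pa1 : ∀ t, a * (ad * (a * t)) = a * t := fun t => by
    rw [← mul_assoc, ← mul_assoc, a1]
  have Pa1t : a * (ad * a) = a := by rw [← mul_assoc, a1]
  have Pa2 : ∀ t, ad * (a * (ad * t)) = ad * t := fun t => by
    rw [← mul_assoc, ← mul_assoc, a2]
  have Pa2t : ad * (a * ad) = ad := by rw [← mul_assoc, a2]
  have Psb1c : ∀ t, star b * (star bd * (star b * t)) = star b * t := fun t => by
    rw [← mul_assoc, ← mul_assoc, mul_assoc (star b), Psb1]
  have Psbd2c : ∀ t, star bd * (star b * (star bd * t)) = star bd * t := fun t => by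
    rw [← mul_assoc, ← mul_assoc, mul_assoc (star bd), Psbd2]
  have S1c : ∀ t, star bd * (star b * t) = b * (bd * t) := fun t => by
    rw [← mul_assoc, Sb1, mul_assoc]
  have S2c : ∀ t, star b * (star bd * t) = bd * (b * t) := fun t => by
    rw [← mul_assoc, Sb2, mul_assoc]
  have hbb' : b * (bd * b) = b := by rw [← mul_assoc, b1]
  have hbdb' : bd * (b * bd) = bd := by rw [← mul_assoc, b2]
  have Tb1 : bd * (b * star b) = star b := by
    have hh := congrArg star hbb'
    rw [star_mul, b3] at hh
    rw [← mul_assoc]; exact hh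
  have Tb2 : b * (bd * star bd) = star bd := by
    have hh := congrArg star hbdb'
    rw [star_mul, b4] at hh
    rw [← mul_assoc]; exact hh
  have Tb1c : ∀ t, bd * (b * (star b * t)) = star b * t := fun t => by
    rw [← mul_assoc, ← mul_assoc, mul_assoc bd, Tb1]
  have Tb2c : ∀ t, b * (bd * (star bd * t)) = star bd * t := fun t => by
    rw [← mul_assoc, ← mul_assoc, mul_assoc b, Tb2]
  refine ⟨⟨?_, ?_, ?_, ?_⟩, csbd_ad⟩
  · simp only [mul_assoc, star_mul, star_star,
      mul_left_comm_of hba, hba, mul_left_comm_of cb_ad, cb_ad,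
      mul_left_comm_of hbsa, hbsa, mul_left_comm_of csad_b, csad_b,
      mul_left_comm_of ca_bd.symm, ca_bd.symm, mul_left_comm_of cbd_ad, cbd_ad,
      mul_left_comm_of csa_bd.symm, csa_bd.symm, mul_left_comm_of csad_bd, csad_bd,
      mul_left_comm_of hsba, hsba, mul_left_comm_of csb_ad, csb_ad,
      mul_left_comm_of hsbsa, hsbsa, mul_left_comm_of csad_sb, csad_sb,
      mul_left_comm_of csbd_a, csbd_a, mul_left_comm_of csbd_ad, csbd_ad,
      mul_left_comm_of csbd_sa, csbd_sa, mul_left_comm_of csad_sbd, csad_sbd,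
      Pa1, Pa1t, Pa2, Pa2t, Psb1, Psb1c, Psbd2, Psbd2c,
      Sb1, S1c, Sb2, S2c, e3a, e3a', e4a, e4a', Tb1, Tb1c, Tb2, Tb2c]
  · simp only [mul_assoc, star_mul, star_star,
      mul_left_comm_of hba, hba, mul_left_comm_of cb_ad, cb_ad,
      mul_left_comm_of hbsa, hbsa, mul_left_comm_of csad_b, csad_b,
      mul_left_comm_of ca_bd.symm, ca_bd.symm, mul_left_comm_of cbd_ad, cbd_ad,
      mul_left_comm_of csa_bd.symm, csa_bd.symm, mul_left_comm_of csad_bd, csad_bd,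
      mul_left_comm_of hsba, hsba, mul_left_comm_of csb_ad, csb_ad,
      mul_left_comm_of hsbsa, hsbsa, mul_left_comm_of csad_sb, csad_sb,
      mul_left_comm_of csbd_a, csbd_a, mul_left_comm_of csbd_ad, csbd_ad,
      mul_left_comm_of csbd_sa, csbd_sa, mul_left_comm_of csad_sbd, csad_sbd,
      Pa1, Pa1t, Pa2, Pa2t, Psb1, Psb1c, Psbd2, Psbd2c,
      Sb1, S1c, Sb2, S2c, e3a, e3a', e4a, e4a', Tb1, Tb1c, Tb2, Tb2c]
  · simp only [mul_assoc, star_mul, star_star,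
      mul_left_comm_of hba, hba, mul_left_comm_of cb_ad, cb_ad,
      mul_left_comm_of hbsa, hbsa, mul_left_comm_of csad_b, csad_b,
      mul_left_comm_of ca_bd.symm, ca_bd.symm, mul_left_comm_of cbd_ad, cbd_ad,
      mul_left_comm_of csa_bd.symm, csa_bd.symm, mul_left_comm_of csad_bd, csad_bd,
      mul_left_comm_of hsba, hsba, mul_left_comm_of csb_ad, csb_ad,
      mul_left_comm_of hsbsa, hsbsa, mul_left_comm_of csad_sb, csad_sb,
      mul_left_comm_of csbd_a, csbd_a, mul_left_comm_of csbd_ad, csbd_ad,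
      mul_left_comm_of csbd_sa, csbd_sa, mul_left_comm_of csad_sbd, csad_sbd,
      Pa1, Pa1t, Pa2, Pa2t, Psb1, Psb1c, Psbd2, Psbd2c,
      Sb1, S1c, Sb2, S2c, e3a, e3a', e4a, e4a', Tb1, Tb1c, Tb2, Tb2c]
  · simp only [mul_assoc, star_mul, star_star,
      mul_left_comm_of hba, hba, mul_left_comm_of cb_ad, cb_ad,
      mul_left_comm_of hbsa, hbsa, mul_left_comm_of csad_b, csad_b,
      mul_left_comm_of ca_bd.symm, ca_bd.symm, mul_left_comm_of cbd_ad, cbd_ad,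
      mul_left_comm_of csa_bd.symm, csa_bd.symm, mul_left_comm_of csad_bd, csad_bd,
      mul_left_comm_of hsba, hsba, mul_left_comm_of csb_ad, csb_ad,
      mul_left_comm_of hsbsa, hsbsa, mul_left_comm_of csad_sb, csad_sb,
      mul_left_comm_of csbd_a, csbd_a, mul_left_comm_of csbd_ad, csbd_ad,
      mul_left_comm_of csbd_sa, csbd_sa, mul_left_comm_of csad_sbd, csad_sbd,
      Pa1, Pa1t, Pa2, Pa2t, Psb1, Psb1c, Psbd2, Psbd2c,
      Sb1, S1c, Sb2, S2c, e3a, e3a', e4a, e4a', Tb1, Tb1c, Tb2, Tb2c]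
end
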